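/- Let D- be a canonical negative Boolean automaton double-cycle with both cycle sizes n and m even, n,m ≥ 2 (f_c(x) = (¬x^ℓ_{n-1}) ∧ (¬x^r_{m-1}), other automata copy their predecessor). Then the configuration ((10)^{n/2}, 1^m) is reachable from (0^n, 0^m) by a sequence of at most (n-1)(n+m-2) asynchronous single-automaton updates. -/
import Mathlib
set_option linter.unusedSectionVars false


/-- A configuration of a Boolean automaton double-cycle with cycles of sizes `n`
and `m`: the shared automaton `c` is index 0 of both cycles (so valid
configurations satisfy `x.1 0 = x.2 0`). -/
abbrev Cfg (n m : ℕ) := (Fin n → Bool) × (Fin m → Bool)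

/-- One asynchronous single-automaton update in a double-cycle whose shared
automaton `c` computes `fc`; every non-shared automaton copies its predecessor. -/
inductive Step {n m : ℕ} (fc : Cfg n m → Bool) : Cfg n m → Cfg n m → Prop
  | left (x : Cfg n m) (i : Fin n) (hi : 1 ≤ i.val) :
      Step fc x (Function.update x.1 i (x.1 ⟨i.val - 1, by have := i.isLt; omega⟩), x.2)
  | right (x : Cfg n m) (j : Fin m) (hj : 1 ≤ j.val) :
      Step fc x (x.1, Function.update x.2 j (x.2 ⟨j.val - 1, by have := j.isLt; omega⟩))
  | center (x : Cfg n m) (i : Fin n) (j : Fin m) (hi : i.val = 0) (hj : j.val = 0) :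
      Step fc x (Function.update x.1 i (fc x), Function.update x.2 j (fc x))

/-- `Steps fc k x y`: configuration `y` is obtained from `x` by exactly `k`
asynchronous single-automaton updates. -/
def Steps {n m : ℕ} (fc : Cfg n m → Bool) : ℕ → Cfg n m → Cfg n m → Prop
  | 0, x, y => x = y
  | k + 1, x, y => ∃ z, Step fc x z ∧ Steps fc k z y

/-- value of the center after k rounds -/
def cv (k : ℕ) : Bool := decide (k % 2 = 1)

/-- configuration after k rounds -/
def AA (n m k : ℕ) : Cfg n m :=
  (fun i => if i.val = n - 1 then false else cv (k - i.val), fun _ => cv k)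

/-- configuration in round k after shifting left indices n-2 down to n-1-j -/
def BB (n m k j : ℕ) : Cfg n m :=
  (fun i => if i.val = n - 1 then false
    else if n - 1 - j ≤ i.val then cv (k + 1 - i.val) else cv (k - i.val),
   fun _ => cv k)

/-- configuration in round k after the center update and flooding right indices 1..j -/
def DD (n m k j : ℕ) : Cfg n m :=
  (fun i => if i.val = n - 1 then false else cv (k + 1 - i.val),
   fun i => if i.val ≤ j then cv (k + 1) else cv k)

lemma cv_succ (k : ℕ) : cv (k + 1) = !cv k := by
  rcases Nat.mod_two_eq_zero_or_one k with h | h <;> simp [cv, Nat.add_mod, h]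

lemma Steps.append {n m : ℕ} {fc : Cfg n m → Bool} {a b : ℕ} {x y z : Cfg n m}
    (h1 : Steps fc a x y) (h2 : Steps fc b y z) : Steps fc (a + b) x z := by
  induction a generalizing x with
  | zero =>
      obtain rfl : x = y := h1
      rw [Nat.zero_add]; exact h2
  | succ a ih =>
      obtain ⟨w, hw, hs⟩ := h1
      rw [Nat.succ_add]
      exact ⟨w, hw, ih hs⟩

section rounds
variable {n m : ℕ} (hn : 2 ≤ n) (hm : 2 ≤ m) {fc : Cfg n m → Bool}
variable (hfc : ∀ y : Cfg n m, fc y =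
    (!(y.1 ⟨n - 1, by omega⟩) && !(y.2 ⟨m - 1, by omega⟩)))

include hn hm

lemma steps_BB (k : ℕ) : ∀ j, j ≤ n - 2 → Steps fc j (BB n m k 0) (BB n m k j) := by
  intro j hj
  induction j with
  | zero => rfl
  | succ j ih =>
      have h1 := ih (by omega)
      have key : BB n m k (j + 1) =
          (Function.update (BB n m k j).1 ⟨n - 2 - j, by omega⟩
            ((BB n m k j).1 ⟨(n - 2 - j) - 1, by omega⟩), (BB n m k j).2) := by
        refine Prod.ext ?_ rfl
        funext i
        rcases i with ⟨iv, hiv⟩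
        simp only [BB, Function.update_apply, Fin.mk.injEq, Fin.ext_iff]
        split_ifs <;> first | rfl | (congr 1; omega) | (exfalso; omega)
      have h2 : Steps fc 1 (BB n m k j) (BB n m k (j + 1)) := by
        refine ⟨_, ?_, rfl⟩
        rw [key]
        exact Step.left _ ⟨n - 2 - j, by omega⟩ (by simp; omega)
      exact h1.append h2
  
include hfc in
lemma step_center (k : ℕ) : Step fc (BB n m k (n - 2)) (DD n m k 0) := by
  have hval : fc (BB n m k (n - 2)) = cv (k + 1) := by
    rw [hfc, cv_succ]
    simp only [BB]
    norm_num
  have key : DD n m k 0 =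
      (Function.update (BB n m k (n - 2)).1 ⟨0, by omega⟩ (fc (BB n m k (n - 2))),
       Function.update (BB n m k (n - 2)).2 ⟨0, by omega⟩ (fc (BB n m k (n - 2)))) := by
    rw [hval]
    refine Prod.ext ?_ ?_ <;> funext i <;> rcases i with ⟨iv, hiv⟩ <;>
      simp only [BB, DD, Function.update_apply, Fin.mk.injEq, Fin.ext_iff] <;>
      split_ifs <;> first | rfl | (congr 1; omega) | (exfalso; omega)
  rw [key]
  exact Step.center _ ⟨0, by omega⟩ ⟨0, by omega⟩ rfl rfl

lemma steps_DD (k : ℕ) : ∀ j, j ≤ m - 1 → Steps fc j (DD n m k 0) (DD n m k j) := by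
  intro j hj
  induction j with
  | zero => rfl
  | succ j ih =>
      have h1 := ih (by omega)
      have key : DD n m k (j + 1) =
          ((DD n m k j).1, Function.update (DD n m k j).2 ⟨j + 1, by omega⟩
            ((DD n m k j).2 ⟨(j + 1) - 1, by omega⟩)) := by
        refine Prod.ext rfl ?_
        funext i
        rcases i with ⟨iv, hiv⟩
        simp only [DD, Function.update_apply, Fin.mk.injEq, Fin.ext_iff]
        split_ifs <;> first | rfl | (congr 1; omega) | (exfalso; omega)
      have h2 : Steps fc 1 (DD n m k j) (DD n m k (j + 1)) := by
        refine ⟨_, ?_, rfl⟩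
        rw [key]
        exact Step.right _ ⟨j + 1, by omega⟩ (by simp)
      exact h1.append h2

include hfc in
lemma roundStep (k : ℕ) : Steps fc (n + m - 2) (AA n m k) (AA n m (k + 1)) := by
  have h0 : AA n m k = BB n m k 0 := by
    refine Prod.ext ?_ rfl
    funext i
    rcases i with ⟨iv, hiv⟩
    simp only [AA, BB]
    split_ifs <;> first | rfl | (congr 1; omega) | (exfalso; omega)
  have h4 : DD n m k (m - 1) = AA n m (k + 1) := by
    refine Prod.ext ?_ ?_ <;> funext i <;> rcases i with ⟨iv, hiv⟩ <;>
      simp only [AA, DD] <;>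
      split_ifs <;> first | rfl | (congr 1; omega) | (exfalso; omega)
  have h1 := steps_BB hn hm (fc := fc) k (n - 2) le_rfl
  have h2 : Steps fc 1 (BB n m k (n - 2)) (DD n m k 0) :=
    ⟨_, step_center hn hm hfc k, rfl⟩
  have h3 := steps_DD hn hm (fc := fc) k (m - 1) le_rfl
  have := (h1.append h2).append h3
  rw [← h0, h4] at this
  have hc : n - 2 + 1 + (m - 1) = n + m - 2 := by omega
  rwa [hc] at this

include hfc in
lemma roundsSteps (t : ℕ) : Steps fc (t * (n + m - 2)) (AA n m 0) (AA n m t) := by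
  induction t with
  | zero => rw [Nat.zero_mul]; exact rfl
  | succ t ih =>
      have := ih.append (roundStep hn hm hfc t)
      rwa [← Nat.succ_mul] at this

end rounds

/-- In a canonical negative double-cycle with both cycle sizes even, the
configuration ((10)^{n/2}, 1^m) is reachable from (0^n, 0^m) in at most
(n-1)(n+m-2) asynchronous updates (sequence `comp1`). -/
theorem stmt11 (n m : ℕ) (hn : 2 ≤ n) (hm : 2 ≤ m)
    (hne : n % 2 = 0) (hme : m % 2 = 0) :
    ∃ k ≤ (n - 1) * (n + m - 2),
      Steps (fun y : Cfg n m => !(y.1 ⟨n - 1, by omega⟩) && !(y.2 ⟨m - 1, by omega⟩))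
        k ((fun _ => false, fun _ => false) : Cfg n m)
        ((fun i => decide (i.val % 2 = 0), fun _ => true) : Cfg n m) := by
  refine ⟨(n - 1) * (n + m - 2), le_rfl, ?_⟩
  have hstart : ((fun _ => false, fun _ => false) : Cfg n m) = AA n m 0 := by
    refine Prod.ext ?_ ?_ <;> funext i <;> simp [AA, cv]
  have htgt : ((fun i => decide (i.val % 2 = 0), fun _ => true) : Cfg n m)
      = AA n m (n - 1) := by
    refine Prod.ext ?_ ?_ <;> funext i
    · rcases i with ⟨iv, hiv⟩
      simp only [AA, cv]
      split_ifs with h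
      · simp only [decide_eq_false_iff_not]; omega
      · simp only [decide_eq_decide]; omega
    · show true = cv (n - 1)
      symm
      simp only [cv, decide_eq_true_iff]; omega
  rw [hstart, htgt]
  exact roundsSteps hn hm (fun y => rfl) (n - 1)
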